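/- Let P be a formula-based program. Then for every countable ordinal α the following hold: (1) M_γ =_γ M_α for all γ < α; (2) ⊔_{γ<α} M_γ ⊑_α T_P(⊔_{γ<α} M_γ); (3) M_α = T^{ω₁}_{P,α}(⊔_{γ<α} M_γ); (4) M_α ⊑_{α+1} T_P(M_α). -/

import Mathlib

/-!
Infinite-valued semantics for formula-based logic programs
(Rondogiannis–Wadge style), following Lüdecke,
"Every Formula-Based Logic Program Has a Least Infinite-Valued Model".
-/

noncomputable section

namespace ILP

attribute [local instance] Classical.propDecidable

/-- The first uncountable ordinal. -/
def omega1 : Ordinal.{0} := Ordinal.omega 1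

lemma omega1_isLimit : Order.IsSuccLimit omega1 := Cardinal.isSuccLimit_omega 1

lemma zero_lt_omega1 : (0 : Ordinal) < omega1 := omega1_isLimit.pos

lemma succ_lt_omega1 {a : Ordinal} (h : a < omega1) : a + 1 < omega1 := by
  rw [Ordinal.add_one_eq_succ]
  exact omega1_isLimit.succ_lt h

/-- Pre-truth-values: `F α`, `0`, `T α` for arbitrary ordinals `α`. -/
inductive TVPre : Type 1 where
  | F : Ordinal → TVPre
  | zero : TVPre
  | T : Ordinal → TVPre

/-- A pre-truth-value is countable if its index is a countable ordinal. -/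
def TVPre.countable : TVPre → Prop
  | .F a => a < omega1
  | .zero => True
  | .T a => a < omega1

/-- The set `W` of truth values:
`F_α` (false values) for countable `α`, `0`, and `T_α` (true values) for countable `α`. -/
def W : Type 1 := {v : TVPre // v.countable}

/-- The strict order on truth values:
`F_0 < F_1 < ... < 0 < ... < T_1 < T_0`. -/
def TVPre.lt : TVPre → TVPre → Prop
  | .F a, .F b => a < b
  | .F _, .zero => True
  | .F _, .T _ => True
  | .zero, .T _ => True
  | .T a, .T b => b < a
  | _, _ => False

instance : LT W := ⟨fun x y => TVPre.lt x.1 y.1⟩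

instance : LE W := ⟨fun x y => x = y ∨ x < y⟩

lemma TVPre.lt_trans {a b c : TVPre} (hab : a.lt b) (hbc : b.lt c) : a.lt c := by
  cases a <;> cases b <;> cases c <;> simp_all [TVPre.lt] <;>
    first | exact hab.trans hbc | exact hbc.trans hab

lemma TVPre.lt_irrefl {a : TVPre} (h : a.lt a) : False := by
  cases a <;> simp_all [TVPre.lt]

instance instLinearOrderW : LinearOrder W where
  le_refl a := Or.inl rfl
  le_trans a b c hab hbc := by
    rcases hab with rfl | hab
    · exact hbc
    rcases hbc with rfl | hbc
    · exact Or.inr hab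
    · exact Or.inr (TVPre.lt_trans hab hbc)
  le_antisymm a b hab hba := by
    rcases hab with rfl | hab
    · rfl
    rcases hba with rfl | hba
    · rfl
    exact absurd (TVPre.lt_trans hab hba) TVPre.lt_irrefl
  le_total a b := by
    obtain ⟨a1, ha⟩ := a
    obtain ⟨b1, hb⟩ := b
    have tri : a1 = b1 ∨ a1.lt b1 ∨ b1.lt a1 := by
      cases a1 <;> cases b1 <;> simp [TVPre.lt] <;> (try rename_i x y) <;>
        (try rcases lt_trichotomy x y with h | h | h) <;> tauto
    rcases tri with h | h | h
    · exact Or.inl (Or.inl (Subtype.ext h))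
    · exact Or.inl (Or.inr h)
    · exact Or.inr (Or.inr h)
  lt_iff_le_not_ge a b := by
    constructor
    · intro h
      refine ⟨Or.inr h, ?_⟩
      rintro (rfl | h')
      · exact TVPre.lt_irrefl h
      · exact TVPre.lt_irrefl (TVPre.lt_trans h h')
    · rintro ⟨rfl | h, h2⟩
      · exact absurd (Or.inl rfl) h2
      · exact h
  toDecidableLE := Classical.decRel _

/-- The false value `F_α`. -/
def WF (a : Ordinal) (h : a < omega1) : W := ⟨.F a, h⟩

/-- The true value `T_α`. -/
def WT (a : Ordinal) (h : a < omega1) : W := ⟨.T a, h⟩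

/-- The undefined value `0`. -/
def WZ : W := ⟨.zero, trivial⟩

/-- `deg w < α` : the degree of `w` (which is `∞` for `0`) is less than `α`. -/
def degLT (w : W) (α : Ordinal) : Prop :=
  match w.1 with
  | .F a => a < α
  | .zero => False
  | .T a => a < α

/-- The set of indices of true values occurring in `M`. -/
def TIdx (M : Set W) : Set Ordinal := {a | ∃ w ∈ M, w.1 = TVPre.T a}

/-- The set of indices of false values occurring in `M`. -/
def FIdx (M : Set W) : Set Ordinal := {a | ∃ w ∈ M, w.1 = TVPre.F a}

lemma mem_lt_omega1_of_TIdx {M : Set W} {a : Ordinal} (h : a ∈ TIdx M) : a < omega1 := by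
  obtain ⟨w, _, hw⟩ := h
  have := w.2
  rw [hw] at this
  exact this

lemma mem_lt_omega1_of_FIdx {M : Set W} {a : Ordinal} (h : a ∈ FIdx M) : a < omega1 := by
  obtain ⟨w, _, hw⟩ := h
  have := w.2
  rw [hw] at this
  exact this

/-- The least upper bound of a subset of `W`. -/
def Wsup (M : Set W) : W :=
  if h : (TIdx M).Nonempty then
    WT (sInf (TIdx M))
      (lt_of_le_of_lt (csInf_le' h.choose_spec) (mem_lt_omega1_of_TIdx h.choose_spec))
  else if WZ ∈ M then WZ
  else if h2 : sSup (FIdx M) < omega1 then WF (sSup (FIdx M)) h2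
  else WZ

/-- The greatest lower bound of a subset of `W`. -/
def Winf (M : Set W) : W :=
  if h : (FIdx M).Nonempty then
    WF (sInf (FIdx M))
      (lt_of_le_of_lt (csInf_le' h.choose_spec) (mem_lt_omega1_of_FIdx h.choose_spec))
  else if WZ ∈ M then WZ
  else if h2 : sSup (TIdx M) < omega1 then WT (sSup (TIdx M)) h2
  else WZ

/-- The semantics of negation on `W`. -/
def Wneg : W → W
  | ⟨.F a, h⟩ => WT (a + 1) (succ_lt_omega1 h)
  | ⟨.zero, _⟩ => WZ
  | ⟨.T a, h⟩ => WF (a + 1) (succ_lt_omega1 h)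

/-! ### Syntax -/

/-- A first-order language with finitely many predicate symbols (at least one),
finitely many function symbols and finitely many constants (at least one). -/
structure Language where
  nPred : ℕ
  predAr : Fin nPred → ℕ
  nFun : ℕ
  funAr : Fin nFun → ℕ
  nConst : ℕ
  npos : 1 ≤ nPred
  cpos : 1 ≤ nConst

variable {L : Language}

/-- Terms of the language; variables are indexed by natural numbers. -/
inductive Term (L : Language) : Type where
  | var : ℕ → Term L
  | const : Fin L.nConst → Term L
  | func : (f : Fin L.nFun) → (Fin (L.funAr f) → Term L) → Term L

/-- A term is ground if it contains no variables. -/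
def Term.ground : Term L → Prop
  | .var _ => False
  | .const _ => True
  | .func _ ts => ∀ i, (ts i).ground

/-- The Herbrand universe: the set of ground terms. -/
def HU (L : Language) : Type := {t : Term L // t.ground}

/-- Formulas of the language. -/
inductive Formula (L : Language) : Type where
  | verum : Formula L
  | falsum : Formula L
  | atom : (p : Fin L.nPred) → (Fin (L.predAr p) → Term L) → Formula L
  | neg : Formula L → Formula L
  | conj : Formula L → Formula L → Formula L
  | disj : Formula L → Formula L → Formula L
  | all : ℕ → Formula L → Formula L
  | ex : ℕ → Formula L → Formula L

/-- A ground atom: a predicate symbol applied to ground terms.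
The Herbrand base `H_B` is the type of ground atoms. -/
structure GroundAtom (L : Language) : Type where
  pred : Fin L.nPred
  args : Fin (L.predAr pred) → HU L

/-- An (infinite-valued Herbrand) interpretation. -/
def Interp (L : Language) : Type 1 := GroundAtom L → W

/-- Evaluation of a term under a variable assignment. -/
def Term.evalT (h : ℕ → HU L) : Term L → HU L
  | .var n => h n
  | .const c => ⟨.const c, trivial⟩
  | .func f ts => ⟨.func f fun i => ((ts i).evalT h).1, fun i => ((ts i).evalT h).2⟩

/-- The infinite-valued semantics of formulas, relative to an interpretation and
a variable assignment. -/
def Formula.eval (I : Interp L) : Formula L → (ℕ → HU L) → W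
  | .verum, _ => WT 0 zero_lt_omega1
  | .falsum, _ => WF 0 zero_lt_omega1
  | .atom p ts, h => I ⟨p, fun i => (ts i).evalT h⟩
  | .neg φ, h => Wneg (φ.eval I h)
  | .conj φ ψ, h => min (φ.eval I h) (ψ.eval I h)
  | .disj φ ψ, h => max (φ.eval I h) (ψ.eval I h)
  | .ex v φ, h => Wsup (Set.range fun u : HU L => φ.eval I (Function.update h v u))
  | .all v φ, h => Winf (Set.range fun u : HU L => φ.eval I (Function.update h v u))

/-- The variables occurring in a term. -/
def Term.vars : Term L → Set ℕ
  | .var n => {n}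
  | .const _ => ∅
  | .func _ ts => ⋃ i, (ts i).vars

/-- The free variables of a formula. -/
def Formula.freeVars : Formula L → Set ℕ
  | .verum => ∅
  | .falsum => ∅
  | .atom _ ts => ⋃ i, (ts i).vars
  | .neg φ => φ.freeVars
  | .conj φ ψ => φ.freeVars ∪ ψ.freeVars
  | .disj φ ψ => φ.freeVars ∪ ψ.freeVars
  | .all v φ => φ.freeVars \ {v}
  | .ex v φ => φ.freeVars \ {v}

/-- Applying a substitution to a term. -/
def Term.subst (σ : ℕ → Term L) : Term L → Term L
  | .var n => σ n
  | .const c => .const c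
  | .func f ts => .func f fun i => (ts i).subst σ

/-- Applying a substitution to a formula (bound variables are not substituted). -/
def Formula.subst (σ : ℕ → Term L) : Formula L → Formula L
  | .verum => .verum
  | .falsum => .falsum
  | .atom p ts => .atom p fun i => (ts i).subst σ
  | .neg φ => .neg (φ.subst σ)
  | .conj φ ψ => .conj (φ.subst σ) (ψ.subst σ)
  | .disj φ ψ => .disj (φ.subst σ) (ψ.subst σ)
  | .all v φ => .all v (φ.subst (Function.update σ v (Term.var v)))
  | .ex v φ => .ex v (φ.subst (Function.update σ v (Term.var v)))

/-- A formula-based rule `A ← φ`: the head is an atom `P(t₁,…,tₛ)`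
(hence distinct from `⊤` and `⊥`) and the body is an arbitrary formula. -/
structure Rule (L : Language) : Type where
  headPred : Fin L.nPred
  headArgs : Fin (L.predAr headPred) → Term L
  body : Formula L

/-- The head of a rule, as an atomic formula. -/
def Rule.headAtom (r : Rule L) : Formula L := .atom r.headPred r.headArgs

/-- A formula-based logic program: a finite set of formula-based rules. -/
structure Program (L : Language) : Type where
  rules : Set (Rule L)
  finite : rules.Finite

/-- The set `P_G` of ground instances of a program `P`: pairs `(Aσ, φσ)` obtained
from a rule `A ← φ` of `P` and a substitution `σ` such that `Aσ` is a ground atom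
and `φσ` has no free variables. -/
def groundInstances (P : Program L) : Set (GroundAtom L × Formula L) :=
  {Aφ | ∃ r ∈ P.rules, ∃ σ : ℕ → Term L,
    (∃ hg : ∀ i, ((r.headArgs i).subst σ).ground,
      Aφ.1 = ⟨r.headPred, fun i => ⟨(r.headArgs i).subst σ, hg i⟩⟩) ∧
    Aφ.2 = r.body.subst σ ∧ (r.body.subst σ).freeVars = ∅}

/-- A default variable assignment (possible since there is at least one constant). -/
def defaultAssignment (L : Language) : ℕ → HU L :=
  fun _ => ⟨.const ⟨0, L.cpos⟩, trivial⟩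

/-- The value of a closed formula (independent of the variable assignment). -/
def Formula.evalClosed (I : Interp L) (φ : Formula L) : W :=
  φ.eval I (defaultAssignment L)

/-- The immediate consequence operator `T_P`. -/
def TP (P : Program L) (I : Interp L) : Interp L :=
  fun A => Wsup {w | ∃ φ : Formula L, (A, φ) ∈ groundInstances P ∧ w = φ.evalClosed I}

/-- `I ∥ F_β` : the set of ground atoms receiving value `F_β` under `I`. -/
def Ifalse (I : Interp L) (β : Ordinal) : Set (GroundAtom L) := {A | (I A).1 = TVPre.F β}

/-- `I ∥ T_β` : the set of ground atoms receiving value `T_β` under `I`. -/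
def Itrue (I : Interp L) (β : Ordinal) : Set (GroundAtom L) := {A | (I A).1 = TVPre.T β}

/-- `I =_α J`. -/
def eqa (α : Ordinal) (I J : Interp L) : Prop :=
  ∀ β ≤ α, Ifalse I β = Ifalse J β ∧ Itrue I β = Itrue J β

/-- `I ⊑_α J`. -/
def sqa (α : Ordinal) (I J : Interp L) : Prop :=
  (∀ β < α, eqa β I J) ∧ Ifalse J α ⊆ Ifalse I α ∧ Itrue I α ⊆ Itrue J α

/-- `I ⊏_α J`. -/
def sqlt (α : Ordinal) (I J : Interp L) : Prop := sqa α I J ∧ ¬ eqa α I J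

/-- `I ⊑_∞ J`. -/
def sqinf (I J : Interp L) : Prop := I = J ∨ ∃ α < omega1, sqlt α I J

/-- `I` satisfies the rule `A ← φ`. -/
def satisfies (I : Interp L) (r : Rule L) : Prop :=
  ∀ h : ℕ → HU L, r.body.eval I h ≤ r.headAtom.eval I h

/-- `I` is a model of `P`. -/
def isModel (I : Interp L) (P : Program L) : Prop := ∀ r ∈ P.rules, satisfies I r

/-- The transfinite iterates `T^β_{P,α}(I)`. -/
def iter (P : Program L) (α : Ordinal) (hα : α < omega1) (I : Interp L)
    (β : Ordinal) : Interp L :=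
  Ordinal.limitRecOn β I (fun _ J => TP P J)
    (fun β _ ih A =>
      if degLT (I A) α then I A
      else if ∃ γ, ∃ hγ : γ < β, (ih γ hγ A).1 = TVPre.T α then WT α hα
      else if ∀ γ, ∀ hγ : γ < β, (ih γ hγ A).1 = TVPre.F α then WF α hα
      else WF (α + 1) (succ_lt_omega1 hα))

/-- The union `⊔_{γ<α} I_γ` of a family of interpretations. -/
def unionInterp (α : Ordinal) (hα : α < omega1) (Ig : ∀ γ, γ < α → Interp L) :
    Interp L := fun A =>
  if h : ∃ ζ, ∃ hζ : ζ < α, ((Ig ζ hζ) A).1 = TVPre.F ζ ∨ ((Ig ζ hζ) A).1 = TVPre.T ζ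
  then Ig h.choose h.choose_spec.choose A
  else WF α hα

/-- The approximants `M_α` of a program `P`. -/
def approx (P : Program L) (α : Ordinal) : Interp L :=
  if hα : α < omega1 then
    if (∀ γ, ∀ _ : γ < α, ∀ ζ, ζ < γ → eqa ζ (approx P ζ) (approx P γ)) ∧
        sqa α (unionInterp α hα fun γ _ => approx P γ)
          (TP P (unionInterp α hα fun γ _ => approx P γ))
    then iter P α hα (unionInterp α hα fun γ _ => approx P γ) omega1
    else fun _ => WF 0 zero_lt_omega1
  else fun _ => WF 0 zero_lt_omega1
termination_by α
decreasing_by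
  all_goals first | assumption | exact lt_trans ‹_› ‹_›

/-- The depth `δ_P` of a program `P`. -/
def depth (P : Program L) : Ordinal :=
  sInf {δ | δ < omega1 ∧ ∀ γ, δ ≤ γ → γ < omega1 →
    Ifalse (approx P γ) γ = ∅ ∧ Itrue (approx P γ) γ = ∅}

/-- The least infinite-valued model `M_P` of a program `P`. -/
def MP (P : Program L) : Interp L := fun A =>
  if degLT (approx P (depth P) A) (depth P) then approx P (depth P) A else WZ

/-! ### Three-valued semantics -/

/-- The three truth values `F < 0 < T`. -/
inductive TV3 : Type where
  | F : TV3
  | Z : TV3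
  | T : TV3
deriving DecidableEq

/-- Numeric coding of the three truth values. -/
def TV3.toNat : TV3 → ℕ
  | .F => 0
  | .Z => 1
  | .T => 2

instance : LinearOrder TV3 :=
  LinearOrder.lift' TV3.toNat (fun a b => by
    cases a <;> cases b <;> simp [TV3.toNat])

/-- A three-valued interpretation. -/
def Interp3 (L : Language) : Type := GroundAtom L → TV3

/-- Supremum of a set of three-valued truth values. -/
def sup3 (S : Set TV3) : TV3 :=
  if TV3.T ∈ S then .T else if TV3.Z ∈ S then .Z else .F

/-- Infimum of a set of three-valued truth values. -/
def inf3 (S : Set TV3) : TV3 :=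
  if TV3.F ∈ S then .F else if TV3.Z ∈ S then .Z else .T

/-- Three-valued negation. -/
def neg3 : TV3 → TV3
  | .F => .T
  | .Z => .Z
  | .T => .F

/-- The three-valued semantics of formulas. -/
def Formula.eval3 (K : Interp3 L) : Formula L → (ℕ → HU L) → TV3
  | .verum, _ => .T
  | .falsum, _ => .F
  | .atom p ts, h => K ⟨p, fun i => (ts i).evalT h⟩
  | .neg φ, h => neg3 (φ.eval3 K h)
  | .conj φ ψ, h => min (φ.eval3 K h) (ψ.eval3 K h)
  | .disj φ ψ, h => max (φ.eval3 K h) (ψ.eval3 K h)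
  | .ex v φ, h => sup3 (Set.range fun u : HU L => φ.eval3 K (Function.update h v u))
  | .all v φ, h => inf3 (Set.range fun u : HU L => φ.eval3 K (Function.update h v u))

/-- Collapsing all false values to `F` and all true values to `T`. -/
def collapse : W → TV3 := fun w =>
  match w.1 with
  | .F _ => .F
  | .zero => .Z
  | .T _ => .T

/-- The collapse of an infinite-valued interpretation. -/
def collapseI (I : Interp L) : Interp3 L := fun A => collapse (I A)

/-- `K` is a three-valued model of `P`. -/
def isModel3 (K : Interp3 L) (P : Program L) : Prop :=
  ∀ r ∈ P.rules, ∀ h : ℕ → HU L, r.body.eval3 K h ≤ r.headAtom.eval3 K h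

/-- The three-valued interpretation `M_{P,3}`. -/
def MP3 (P : Program L) : Interp3 L := collapseI (MP P)

/-- The negation degree of a formula. -/
def Formula.negDeg : Formula L → ℕ
  | .verum => 0
  | .falsum => 0
  | .atom _ _ => 0
  | .neg φ => φ.negDeg + 1
  | .conj φ ψ => max φ.negDeg ψ.negDeg
  | .disj φ ψ => max φ.negDeg ψ.negDeg
  | .all _ φ => φ.negDeg
  | .ex _ φ => φ.negDeg



/-! ### Auxiliary development -/

section Aux

variable {L : Language}

-- Basic order computation lemmas on W

lemma W_ext {v w : W} (h : v.1 = w.1) : v = w := Subtype.ext h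

lemma lt_iff_ltPre {v w : W} : v < w ↔ TVPre.lt v.1 w.1 := Iff.rfl

@[simp] lemma WF_lt_WF {a b : Ordinal} {ha hb} : WF a ha < WF b hb ↔ a < b := Iff.rfl
@[simp] lemma WT_lt_WT {a b : Ordinal} {ha hb} : WT a ha < WT b hb ↔ b < a := Iff.rfl
@[simp] lemma WF_lt_WT {a b : Ordinal} {ha hb} : WF a ha < WT b hb := trivial
@[simp] lemma WF_lt_WZ {a : Ordinal} {ha} : WF a ha < WZ := trivial
@[simp] lemma WZ_lt_WT {a : Ordinal} {ha} : WZ < WT a ha := trivial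
@[simp] lemma not_WT_lt_WF {a b : Ordinal} {ha hb} : ¬ WT a ha < WF b hb := id
@[simp] lemma not_WZ_lt_WF {a : Ordinal} {ha} : ¬ WZ < WF a ha := id
@[simp] lemma not_WT_lt_WZ {a : Ordinal} {ha} : ¬ WT a ha < WZ := id

@[simp] lemma WF_eq_WF {a b : Ordinal} {ha hb} : WF a ha = WF b hb ↔ a = b := by
  constructor
  · intro h; have := congrArg Subtype.val h; simpa [WF] using this
  · rintro rfl; rfl

@[simp] lemma WT_eq_WT {a b : Ordinal} {ha hb} : WT a ha = WT b hb ↔ a = b := by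
  constructor
  · intro h; have := congrArg Subtype.val h; simpa [WT] using this
  · rintro rfl; rfl

@[simp] lemma WF_ne_WT {a b : Ordinal} {ha hb} : WF a ha ≠ WT b hb := by
  intro h; have := congrArg Subtype.val h; simp [WF, WT] at this
@[simp] lemma WF_ne_WZ {a : Ordinal} {ha} : WF a ha ≠ WZ := by
  intro h; have := congrArg Subtype.val h; simp [WF, WZ] at this
@[simp] lemma WZ_ne_WT {a : Ordinal} {ha} : WZ ≠ WT a ha := by
  intro h; have := congrArg Subtype.val h; simp [WT, WZ] at this
@[simp] lemma WT_ne_WF {a b : Ordinal} {ha hb} : WT a ha ≠ WF b hb := by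
  intro h; have := congrArg Subtype.val h; simp [WF, WT] at this

@[simp] lemma WF_le_WF {a b : Ordinal} {ha hb} : WF a ha ≤ WF b hb ↔ a ≤ b := by
  rw [le_iff_lt_or_eq]
  rw [WF_lt_WF, WF_eq_WF, ← le_iff_lt_or_eq]

@[simp] lemma WT_le_WT {a b : Ordinal} {ha hb} : WT a ha ≤ WT b hb ↔ b ≤ a := by
  rw [le_iff_lt_or_eq]
  constructor
  · rintro (h | h); · exact le_of_lt h
    · have := congrArg Subtype.val h; simp [WT] at this; exact le_of_eq this.symm
  · intro h; rcases lt_or_eq_of_le h with h | h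
    · exact Or.inl h
    · exact Or.inr (by simp [h])

@[simp] lemma WF_le_WT {a b : Ordinal} {ha hb} : WF a ha ≤ WT b hb := le_of_lt WF_lt_WT
@[simp] lemma WF_le_WZ {a : Ordinal} {ha} : WF a ha ≤ WZ := le_of_lt WF_lt_WZ
@[simp] lemma WZ_le_WT {a : Ordinal} {ha} : WZ ≤ WT a ha := le_of_lt WZ_lt_WT
@[simp] lemma not_WT_le_WF {a b : Ordinal} {ha hb} : ¬ WT a ha ≤ WF b hb := by
  rw [le_iff_lt_or_eq]; rintro (h | h); · exact h
  · exact WT_ne_WF h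
@[simp] lemma not_WZ_le_WF {a : Ordinal} {ha} : ¬ WZ ≤ WF a ha := by
  rw [le_iff_lt_or_eq]; rintro (h | h); · exact h
  · exact WF_ne_WZ h.symm
@[simp] lemma not_WT_le_WZ {a : Ordinal} {ha} : ¬ WT a ha ≤ WZ := by
  rw [le_iff_lt_or_eq]; rintro (h | h); · exact h
  · exact WZ_ne_WT h.symm

/-- Case analysis on a truth value. -/
lemma W_cases (w : W) :
    (∃ a ha, w = WF a ha) ∨ w = WZ ∨ (∃ a ha, w = WT a ha) := by
  obtain ⟨v, hv⟩ := w
  cases v with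
  | F a => exact Or.inl ⟨a, hv, rfl⟩
  | zero => exact Or.inr (Or.inl rfl)
  | T a => exact Or.inr (Or.inr ⟨a, hv, rfl⟩)

end Aux


section GSQ

/-- Generic "⊑ at level" relation in a linear order, with bounds `b < t`. -/
def gsq {X : Type*} [LinearOrder X] (b t v w : X) : Prop :=
  v = w ∨ (b ≤ v ∧ v < t ∧ b < w ∧ w ≤ t)

variable {X : Type*} [LinearOrder X] {b t v w x v1 v2 w1 w2 : X}

lemma gsq_refl : gsq b t v v := Or.inl rfl

lemma gsq_trans (h1 : gsq b t v w) (h2 : gsq b t w x) : gsq b t v x := by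
  rcases h1 with rfl | h1
  · exact h2
  rcases h2 with rfl | h2
  · exact Or.inr h1
  · exact Or.inr ⟨h1.1, h1.2.1, h2.2.2⟩

lemma gsq_min (h1 : gsq b t v1 w1) (h2 : gsq b t v2 w2) :
    gsq b t (min v1 v2) (min w1 w2) := by
  have key : ∀ (c v2 w2 : X), gsq b t v2 w2 → gsq b t (min c v2) (min c w2) := by
    intro c v2 w2 h2
    rcases h2 with rfl | ⟨hbv, hvt, hbw, hwt⟩
    · exact gsq_refl
    rcases lt_or_ge c b with hc | hc
    · rw [min_eq_left (le_of_lt (lt_of_lt_of_le hc hbv)),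
        min_eq_left (le_of_lt (lt_trans hc hbw))]
      exact gsq_refl
    rcases le_or_gt t c with hc2 | hc2
    · rw [min_eq_right (le_of_lt (lt_of_lt_of_le hvt hc2)),
        min_eq_right (le_trans hwt hc2)]
      exact Or.inr ⟨hbv, hvt, hbw, hwt⟩
    -- b ≤ c < t
    rcases le_or_gt w2 c with hw | hw
    · rw [min_eq_right hw]
      refine Or.inr ⟨le_min hc hbv, lt_of_le_of_lt (min_le_left _ _) hc2, hbw, hwt⟩
    · rw [min_eq_left (le_of_lt hw)]
      rcases le_or_gt c v2 with hv | hv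
      · rw [min_eq_left hv]; exact gsq_refl
      · rw [min_eq_right (le_of_lt hv)]
        exact Or.inr ⟨hbv, lt_trans hv hc2, lt_of_le_of_lt hbv hv, le_of_lt hc2⟩
  rcases h1 with rfl | ⟨hbv, hvt, hbw, hwt⟩
  · exact key _ _ _ h2
  rcases h2 with rfl | ⟨hbv2, hvt2, hbw2, hwt2⟩
  · rw [min_comm v1, min_comm w1]
    exact key _ _ _ (Or.inr ⟨hbv, hvt, hbw, hwt⟩)
  · exact Or.inr ⟨le_min hbv hbv2, lt_of_le_of_lt (min_le_left _ _) hvt,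
      lt_min hbw hbw2, le_trans (min_le_left _ _) hwt⟩

lemma gsq_max (h1 : gsq b t v1 w1) (h2 : gsq b t v2 w2) :
    gsq b t (max v1 v2) (max w1 w2) := by
  have d1 : gsq (OrderDual.toDual t) (OrderDual.toDual b)
      (OrderDual.toDual w1) (OrderDual.toDual v1) := by
    rcases h1 with rfl | h1
    · exact gsq_refl
    · exact Or.inr ⟨h1.2.2.2, h1.2.2.1, h1.2.1, h1.1⟩
  have d2 : gsq (OrderDual.toDual t) (OrderDual.toDual b)
      (OrderDual.toDual w2) (OrderDual.toDual v2) := by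
    rcases h2 with rfl | h2
    · exact gsq_refl
    · exact Or.inr ⟨h2.2.2.2, h2.2.2.1, h2.2.1, h2.1⟩
  have := gsq_min d1 d2
  rcases this with h | h
  · left
    have : max w1 w2 = max v1 v2 := h
    exact this.symm
  · right
    exact ⟨h.2.2.2, h.2.2.1, h.2.1, h.1⟩

end GSQ

section WGSQ

variable {α : Ordinal} {hα : α < omega1}

/-- Classification of values `≥ T_α`. -/
lemma WT_le_cases {w : W} (h : WT α hα ≤ w) : ∃ b hb, b ≤ α ∧ w = WT b hb := by
  rcases W_cases w with ⟨a, ha, rfl⟩ | rfl | ⟨a, ha, rfl⟩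
  · exact absurd h not_WT_le_WF
  · exact absurd h not_WT_le_WZ
  · exact ⟨a, ha, WT_le_WT.1 h, rfl⟩

/-- Classification of values `≤ F_α`. -/
lemma le_WF_cases {w : W} (h : w ≤ WF α hα) : ∃ b hb, b ≤ α ∧ w = WF b hb := by
  rcases W_cases w with ⟨a, ha, rfl⟩ | rfl | ⟨a, ha, rfl⟩
  · exact ⟨a, ha, WF_le_WF.1 h, rfl⟩
  · exact absurd h not_WZ_le_WF
  · exact absurd h not_WT_le_WF

lemma gsq_neg {v w : W} (h : gsq (WF α hα) (WT α hα) v w) :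
    gsq (WF α hα) (WT α hα) (Wneg v) (Wneg w) := by
  rcases h with rfl | ⟨hbv, hvt, hbw, hwt⟩
  · exact gsq_refl
  right
  refine ⟨?_, ?_, ?_, ?_⟩
  · rcases W_cases v with ⟨a, ha, rfl⟩ | rfl | ⟨a, ha, rfl⟩
    · show WF α hα ≤ WT (a+1) _
      exact WF_le_WT
    · exact WF_le_WZ
    · show WF α hα ≤ WF (a+1) _
      have : α < a := WT_lt_WT.1 hvt
      exact WF_le_WF.2 (le_of_lt (lt_trans this (lt_add_one a)))
  · rcases W_cases v with ⟨a, ha, rfl⟩ | rfl | ⟨a, ha, rfl⟩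
    · show WT (a+1) _ < WT α hα
      have : α ≤ a := WF_le_WF.1 hbv
      exact WT_lt_WT.2 (lt_of_le_of_lt this (lt_add_one a))
    · exact WZ_lt_WT
    · exact WF_lt_WT
  · rcases W_cases w with ⟨a, ha, rfl⟩ | rfl | ⟨a, ha, rfl⟩
    · show WF α hα < WT (a+1) _
      exact WF_lt_WT
    · exact WF_lt_WZ
    · show WF α hα < WF (a+1) _
      have : α ≤ a := WT_le_WT.1 hwt
      exact WF_lt_WF.2 (lt_of_le_of_lt this (lt_add_one a))
  · rcases W_cases w with ⟨a, ha, rfl⟩ | rfl | ⟨a, ha, rfl⟩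
    · show WT (a+1) _ ≤ WT α hα
      have : α < a := WF_lt_WF.1 hbw
      exact WT_le_WT.2 (le_of_lt (lt_trans this (lt_add_one a)))
    · exact WZ_le_WT
    · exact WF_le_WT

end WGSQ


section WsupLemmas

variable {M : Set W}

lemma FIdx_bddAbove (M : Set W) : BddAbove (FIdx M) :=
  ⟨omega1, fun _ hx => le_of_lt (mem_lt_omega1_of_FIdx hx)⟩

lemma TIdx_bddAbove (M : Set W) : BddAbove (TIdx M) :=
  ⟨omega1, fun _ hx => le_of_lt (mem_lt_omega1_of_TIdx hx)⟩

lemma le_Wsup {w : W} (hw : w ∈ M) : w ≤ Wsup M := by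
  unfold Wsup
  split_ifs with h1 h2 h3
  · rcases W_cases w with ⟨a, ha, rfl⟩ | rfl | ⟨a, ha, rfl⟩
    · exact WF_le_WT
    · exact WZ_le_WT
    · exact WT_le_WT.2 (csInf_le' ⟨_, hw, rfl⟩)
  · rcases W_cases w with ⟨a, ha, rfl⟩ | rfl | ⟨a, ha, rfl⟩
    · exact WF_le_WZ
    · exact le_refl _
    · exact absurd ⟨a, _, hw, rfl⟩ h1
  · rcases W_cases w with ⟨a, ha, rfl⟩ | rfl | ⟨a, ha, rfl⟩
    · exact WF_le_WF.2 (le_csSup (FIdx_bddAbove M) ⟨_, hw, rfl⟩)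
    · exact absurd hw h2
    · exact absurd ⟨a, _, hw, rfl⟩ h1
  · rcases W_cases w with ⟨a, ha, rfl⟩ | rfl | ⟨a, ha, rfl⟩
    · exact WF_le_WZ
    · exact le_refl _
    · exact absurd ⟨a, _, hw, rfl⟩ h1

lemma Wsup_le {c : W} (hb : ∀ x ∈ M, x ≤ c) : Wsup M ≤ c := by
  have hF : ∀ (d : Ordinal) (hd), c = WF d hd → ¬(TIdx M).Nonempty → WZ ∉ M →
      sSup (FIdx M) ≤ d := by
    intro d hd hc h1 h2
    rcases Set.eq_empty_or_nonempty (FIdx M) with he | hne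
    · rw [he, csSup_empty]; exact bot_le
    · refine csSup_le hne ?_
      rintro a ⟨w, hwM, hw1⟩
      have : w = WF a (by have := w.2; rw [hw1] at this; exact this) := W_ext hw1
      have h := hb w hwM
      rw [this, hc] at h
      exact WF_le_WF.1 h
  unfold Wsup
  split_ifs with h1 h2 h3
  · obtain ⟨w, hwM, hw1⟩ := csInf_mem h1
    have : w = WT (sInf (TIdx M)) (by have := w.2; rw [hw1] at this; exact this) := W_ext hw1
    rw [← this]; exact hb w hwM
  · exact hb _ h2
  · rcases W_cases c with ⟨d, hd, rfl⟩ | rfl | ⟨d, hd, rfl⟩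
    · exact WF_le_WF.2 (hF d hd rfl h1 h2)
    · exact WF_le_WZ
    · exact WF_le_WT
  · rcases W_cases c with ⟨d, hd, rfl⟩ | rfl | ⟨d, hd, rfl⟩
    · exact absurd (lt_of_le_of_lt (hF d hd rfl h1 h2) hd) h3
    · exact le_refl _
    · exact WZ_le_WT

lemma Wsup_T_mem {a : Ordinal} (h : (Wsup M).1 = TVPre.T a) : Wsup M ∈ M := by
  revert h
  unfold Wsup
  split_ifs with h1 h2 h3
  · intro _
    obtain ⟨w, hwM, hw1⟩ := csInf_mem h1
    have : w = WT (sInf (TIdx M)) (by have := w.2; rw [hw1] at this; exact this) := W_ext hw1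
    rw [← this]; exact hwM
  · intro h; exact absurd h (by simp [WZ])
  · intro h; exact absurd h (by simp [WF])
  · intro h; exact absurd h (by simp [WZ])

lemma Winf_le {w : W} (hw : w ∈ M) : Winf M ≤ w := by
  unfold Winf
  split_ifs with h1 h2 h3
  · rcases W_cases w with ⟨a, ha, rfl⟩ | rfl | ⟨a, ha, rfl⟩
    · exact WF_le_WF.2 (csInf_le' ⟨_, hw, rfl⟩)
    · exact WF_le_WZ
    · exact WF_le_WT
  · rcases W_cases w with ⟨a, ha, rfl⟩ | rfl | ⟨a, ha, rfl⟩
    · exact absurd ⟨a, _, hw, rfl⟩ h1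
    · exact le_refl _
    · exact WZ_le_WT
  · rcases W_cases w with ⟨a, ha, rfl⟩ | rfl | ⟨a, ha, rfl⟩
    · exact absurd ⟨a, _, hw, rfl⟩ h1
    · exact absurd hw h2
    · exact WT_le_WT.2 (le_csSup (TIdx_bddAbove M) ⟨_, hw, rfl⟩)
  · rcases W_cases w with ⟨a, ha, rfl⟩ | rfl | ⟨a, ha, rfl⟩
    · exact absurd ⟨a, _, hw, rfl⟩ h1
    · exact le_refl _
    · exact WZ_le_WT

lemma le_Winf {c : W} (hb : ∀ x ∈ M, c ≤ x) : c ≤ Winf M := by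
  have hT : ∀ (d : Ordinal) (hd), c = WT d hd → ¬(FIdx M).Nonempty → WZ ∉ M →
      sSup (TIdx M) ≤ d := by
    intro d hd hc h1 h2
    rcases Set.eq_empty_or_nonempty (TIdx M) with he | hne
    · rw [he, csSup_empty]; exact bot_le
    · refine csSup_le hne ?_
      rintro a ⟨w, hwM, hw1⟩
      have : w = WT a (by have := w.2; rw [hw1] at this; exact this) := W_ext hw1
      have h := hb w hwM
      rw [this, hc] at h
      exact WT_le_WT.1 h
  unfold Winf
  split_ifs with h1 h2 h3
  · obtain ⟨w, hwM, hw1⟩ := csInf_mem h1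
    have : w = WF (sInf (FIdx M)) (by have := w.2; rw [hw1] at this; exact this) := W_ext hw1
    rw [← this]; exact hb w hwM
  · exact hb _ h2
  · rcases W_cases c with ⟨d, hd, rfl⟩ | rfl | ⟨d, hd, rfl⟩
    · exact WF_le_WT
    · exact WZ_le_WT
    · exact WT_le_WT.2 (hT d hd rfl h1 h2)
  · rcases W_cases c with ⟨d, hd, rfl⟩ | rfl | ⟨d, hd, rfl⟩
    · exact WF_le_WZ
    · exact le_refl _
    · exact absurd (lt_of_le_of_lt (hT d hd rfl h1 h2) hd) h3

lemma Winf_F_mem {a : Ordinal} (h : (Winf M).1 = TVPre.F a) : Winf M ∈ M := by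
  revert h
  unfold Winf
  split_ifs with h1 h2 h3
  · intro _
    obtain ⟨w, hwM, hw1⟩ := csInf_mem h1
    have : w = WF (sInf (FIdx M)) (by have := w.2; rw [hw1] at this; exact this) := W_ext hw1
    rw [← this]; exact hwM
  · intro h; exact absurd h (by simp [WZ])
  · intro h; exact absurd h (by simp [WT])
  · intro h; exact absurd h (by simp [WZ])

end WsupLemmas


section SupInfGsq

variable {α : Ordinal} {hα : α < omega1} {ι : Type*} {s : Set ι} {f g : ι → W}

lemma image_eq_of_eqOn (h : ∀ u ∈ s, f u = g u) : f '' s = g '' s := by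
  ext w
  constructor
  · rintro ⟨u, hu, rfl⟩; exact ⟨u, hu, (h u hu).symm⟩
  · rintro ⟨u, hu, rfl⟩; exact ⟨u, hu, h u hu⟩

lemma sup_gsq (h : ∀ u ∈ s, gsq (WF α hα) (WT α hα) (f u) (g u)) :
    gsq (WF α hα) (WT α hα) (Wsup (f '' s)) (Wsup (g '' s)) := by
  by_cases hA : WT α hα ≤ Wsup (f '' s)
  · obtain ⟨b0, hb0, hb0le, hSeq⟩ := WT_le_cases hA
    have hmem : Wsup (f '' s) ∈ f '' s := Wsup_T_mem (by rw [hSeq]; rfl)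
    obtain ⟨u, hu, hfu⟩ := hmem
    have h2 := h u hu
    rw [hfu] at h2
    have hgu : g u = Wsup (f '' s) := by
      rcases h2 with he | hbig
      · exact he.symm
      · exact absurd hbig.2.1 (not_lt_of_ge hA)
    left
    refine le_antisymm ?_ ?_
    · rw [← hgu]; exact le_Wsup (Set.mem_image_of_mem g hu)
    · refine Wsup_le ?_
      rintro x ⟨u', hu', rfl⟩
      rcases h u' hu' with he | hbig
      · rw [← he]; exact le_Wsup (Set.mem_image_of_mem f hu')
      · exact le_trans hbig.2.2.2 hA
  · by_cases hB : Wsup (g '' s) ≤ WF α hα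
    · left
      have heq : ∀ u ∈ s, f u = g u := by
        intro u hu
        rcases h u hu with he | hbig
        · exact he
        · have h1 : g u ≤ WF α hα := le_trans (le_Wsup (Set.mem_image_of_mem g hu)) hB
          exact absurd (lt_of_lt_of_le hbig.2.2.1 h1) (lt_irrefl _)
      rw [image_eq_of_eqOn heq]
    · right
      have hSt : Wsup (f '' s) < WT α hα := not_le.1 hA
      have hbS' : WF α hα < Wsup (g '' s) := not_le.1 hB
      refine ⟨?_, hSt, hbS', ?_⟩
      · by_contra hc
        have hSb : Wsup (f '' s) < WF α hα := not_le.1 hc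
        have heq : ∀ u ∈ s, f u = g u := by
          intro u hu
          rcases h u hu with he | hbig
          · exact he
          · exact absurd (lt_of_le_of_lt
              (le_trans hbig.1 (le_Wsup (Set.mem_image_of_mem f hu))) hSb) (lt_irrefl _)
        rw [image_eq_of_eqOn heq] at hSb
        exact absurd (lt_trans hbS' hSb) (lt_irrefl _)
      · by_contra hc
        have htS' : WT α hα < Wsup (g '' s) := not_le.1 hc
        obtain ⟨b0, hb0, hb0le, hSeq⟩ := WT_le_cases (le_of_lt htS')
        have hmem : Wsup (g '' s) ∈ g '' s := Wsup_T_mem (by rw [hSeq]; rfl)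
        obtain ⟨u, hu, hgu⟩ := hmem
        have h2 := h u hu
        rw [hgu] at h2
        rcases h2 with he | hbig
        · have h1 : f u ≤ Wsup (f '' s) := le_Wsup (Set.mem_image_of_mem f hu)
          rw [he] at h1
          exact absurd (lt_of_le_of_lt h1 (lt_trans hSt htS')) (lt_irrefl _)
        · exact absurd (lt_of_le_of_lt hbig.2.2.2 htS') (lt_irrefl _)

lemma inf_gsq (h : ∀ u ∈ s, gsq (WF α hα) (WT α hα) (f u) (g u)) :
    gsq (WF α hα) (WT α hα) (Winf (f '' s)) (Winf (g '' s)) := by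
  by_cases hA : Winf (g '' s) ≤ WF α hα
  · obtain ⟨b0, hb0, hb0le, hSeq⟩ := le_WF_cases hA
    have hmem : Winf (g '' s) ∈ g '' s := Winf_F_mem (by rw [hSeq]; rfl)
    obtain ⟨u, hu, hgu⟩ := hmem
    have h2 := h u hu
    rw [hgu] at h2
    have hfu : f u = Winf (g '' s) := by
      rcases h2 with he | hbig
      · exact he
      · exact absurd hbig.2.2.1 (not_lt_of_ge hA)
    left
    refine le_antisymm ?_ ?_
    · rw [← hfu]; exact Winf_le (Set.mem_image_of_mem f hu)
    · refine le_Winf ?_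
      rintro x ⟨u', hu', rfl⟩
      rcases h u' hu' with he | hbig
      · rw [he]; exact Winf_le (Set.mem_image_of_mem g hu')
      · exact le_trans hA hbig.1
  · by_cases hB : WT α hα ≤ Winf (f '' s)
    · left
      have heq : ∀ u ∈ s, f u = g u := by
        intro u hu
        rcases h u hu with he | hbig
        · exact he
        · have h1 : WT α hα ≤ f u := le_trans hB (Winf_le (Set.mem_image_of_mem f hu))
          exact absurd (lt_of_le_of_lt h1 hbig.2.1) (lt_irrefl _)
      rw [image_eq_of_eqOn heq]
    · right
      have hbS' : WF α hα < Winf (g '' s) := not_le.1 hA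
      have hSt : Winf (f '' s) < WT α hα := not_le.1 hB
      refine ⟨?_, hSt, hbS', ?_⟩
      · by_contra hc
        have hSb : Winf (f '' s) < WF α hα := not_le.1 hc
        obtain ⟨b0, hb0, hb0le, hSeq⟩ := le_WF_cases (le_of_lt hSb)
        have hmem : Winf (f '' s) ∈ f '' s := Winf_F_mem (by rw [hSeq]; rfl)
        obtain ⟨u, hu, hfu⟩ := hmem
        have h2 := h u hu
        rw [hfu] at h2
        rcases h2 with he | hbig
        · have h1 : Winf (g '' s) ≤ g u := Winf_le (Set.mem_image_of_mem g hu)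
          rw [← he] at h1
          exact absurd (lt_of_le_of_lt h1 (lt_trans hSb hbS')) (lt_irrefl _)
        · exact absurd (lt_of_le_of_lt hbig.1 hSb) (lt_irrefl _)
      · by_contra hc
        have htS' : WT α hα < Winf (g '' s) := not_le.1 hc
        have heq : ∀ u ∈ s, f u = g u := by
          intro u hu
          rcases h u hu with he | hbig
          · exact he
          · have h1 : Winf (g '' s) ≤ g u := Winf_le (Set.mem_image_of_mem g hu)
            exact absurd (lt_of_le_of_lt (le_trans h1 hbig.2.2.2) htS') (lt_irrefl _)
        rw [image_eq_of_eqOn heq] at hSt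
        exact absurd (lt_trans htS' hSt) (lt_irrefl _)

end SupInfGsq


section EvalMono

variable {L : Language} {α : Ordinal} {hα : α < omega1}

lemma eval_gsq {I J : Interp L} (h : ∀ A, gsq (WF α hα) (WT α hα) (I A) (J A))
    (φ : Formula L) : ∀ hv : ℕ → HU L,
    gsq (WF α hα) (WT α hα) (φ.eval I hv) (φ.eval J hv) := by
  induction φ with
  | verum => intro hv; exact gsq_refl
  | falsum => intro hv; exact gsq_refl
  | atom p ts => intro hv; exact h _
  | neg φ ih => intro hv; exact gsq_neg (ih hv)
  | conj φ ψ ihφ ihψ => intro hv; exact gsq_min (ihφ hv) (ihψ hv)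
  | disj φ ψ ihφ ihψ => intro hv; exact gsq_max (ihφ hv) (ihψ hv)
  | ex v φ ih =>
    intro hv
    simp only [Formula.eval, ← Set.image_univ]
    exact sup_gsq (fun u _ => ih _)
  | all v φ ih =>
    intro hv
    simp only [Formula.eval, ← Set.image_univ]
    exact inf_gsq (fun u _ => ih _)

lemma TP_set_eq (P : Program L) (I : Interp L) (A : GroundAtom L) :
    {w | ∃ φ : Formula L, (A, φ) ∈ groundInstances P ∧ w = φ.evalClosed I} =
      (fun φ => Formula.evalClosed I φ) '' {φ | (A, φ) ∈ groundInstances P} := by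
  ext w
  constructor
  · rintro ⟨φ, h1, h2⟩; exact ⟨φ, h1, h2.symm⟩
  · rintro ⟨φ, h1, h2⟩; exact ⟨φ, h1, h2.symm⟩

lemma TP_gsq {I J : Interp L} {P : Program L}
    (h : ∀ A, gsq (WF α hα) (WT α hα) (I A) (J A)) (A : GroundAtom L) :
    gsq (WF α hα) (WT α hα) (TP P I A) (TP P J A) := by
  unfold TP
  rw [TP_set_eq, TP_set_eq]
  exact sup_gsq (fun φ _ => eval_gsq h φ _)

end EvalMono


section Levels

variable {α : Ordinal} {hα : α < omega1}

/-- `v` and `w` agree at level `β`. -/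
def veqAt (β : Ordinal) (v w : W) : Prop :=
  (v.1 = TVPre.F β ↔ w.1 = TVPre.F β) ∧ (v.1 = TVPre.T β ↔ w.1 = TVPre.T β)

lemma veqAt_refl {β : Ordinal} {v : W} : veqAt β v v := ⟨Iff.rfl, Iff.rfl⟩

lemma veqAt_symm {β : Ordinal} {v w : W} (h : veqAt β v w) : veqAt β w v :=
  ⟨h.1.symm, h.2.symm⟩

lemma veqAt_trans {β : Ordinal} {v w x : W} (h1 : veqAt β v w) (h2 : veqAt β w x) :
    veqAt β v x := ⟨h1.1.trans h2.1, h1.2.trans h2.2⟩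

lemma big'_of_ne {w : W} (hF : ∀ β ≤ α, w.1 ≠ TVPre.F β) (hT : ∀ β < α, w.1 ≠ TVPre.T β) :
    WF α hα < w ∧ w ≤ WT α hα := by
  rcases W_cases w with ⟨b, hb, rfl⟩ | rfl | ⟨b, hb, rfl⟩
  · rcases le_or_gt b α with h | h
    · exact absurd rfl (hF b h)
    · exact ⟨WF_lt_WF.2 h, WF_le_WT⟩
  · exact ⟨WF_lt_WZ, WZ_le_WT⟩
  · rcases lt_or_ge b α with h | h
    · exact absurd rfl (hT b h)
    · exact ⟨WF_lt_WT, WT_le_WT.2 h⟩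

lemma big_of_ne {v : W} (hF : ∀ β < α, v.1 ≠ TVPre.F β) (hT : ∀ β ≤ α, v.1 ≠ TVPre.T β) :
    WF α hα ≤ v ∧ v < WT α hα := by
  rcases W_cases v with ⟨b, hb, rfl⟩ | rfl | ⟨b, hb, rfl⟩
  · rcases lt_or_ge b α with h | h
    · exact absurd rfl (hF b h)
    · exact ⟨WF_le_WF.2 h, WF_lt_WT⟩
  · exact ⟨WF_le_WZ, WZ_lt_WT⟩
  · rcases le_or_gt b α with h | h
    · exact absurd rfl (hT b h)
    · exact ⟨WF_le_WT, WT_lt_WT.2 h⟩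

lemma ne_of_big' {w : W} (h1 : WF α hα < w) (h2 : w ≤ WT α hα) :
    (∀ β ≤ α, w.1 ≠ TVPre.F β) ∧ (∀ β < α, w.1 ≠ TVPre.T β) := by
  constructor
  · intro β hβ hw
    have : w = WF β (lt_of_le_of_lt hβ hα) := W_ext hw
    rw [this] at h1
    exact absurd (WF_lt_WF.1 h1) (not_lt_of_ge hβ)
  · intro β hβ hw
    have : w = WT β (lt_trans hβ hα) := W_ext hw
    rw [this] at h2
    exact absurd (lt_of_le_of_lt (WT_le_WT.1 h2) hβ) (lt_irrefl _)

lemma ne_of_big {v : W} (h1 : WF α hα ≤ v) (h2 : v < WT α hα) :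
    (∀ β < α, v.1 ≠ TVPre.F β) ∧ (∀ β ≤ α, v.1 ≠ TVPre.T β) := by
  constructor
  · intro β hβ hv
    have : v = WF β (lt_trans hβ hα) := W_ext hv
    rw [this] at h1
    exact absurd (lt_of_le_of_lt (WF_le_WF.1 h1) hβ) (lt_irrefl _)
  · intro β hβ hv
    have : v = WT β (lt_of_le_of_lt hβ hα) := W_ext hv
    rw [this] at h2
    exact absurd (WT_lt_WT.1 h2) (not_lt_of_ge hβ)

/-- The key characterization of `gsq` at bounds `F_α, T_α` in terms of levels. -/
lemma gsq_iff_levels {v w : W} :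
    gsq (WF α hα) (WT α hα) v w ↔
      (∀ β < α, veqAt β v w) ∧ (w.1 = TVPre.F α → v.1 = TVPre.F α) ∧
        (v.1 = TVPre.T α → w.1 = TVPre.T α) := by
  constructor
  · rintro (rfl | ⟨h1, h2, h3, h4⟩)
    · exact ⟨fun _ _ => veqAt_refl, id, id⟩
    have hv := ne_of_big h1 h2
    have hw := ne_of_big' h3 h4
    refine ⟨fun β hβ => ⟨?_, ?_⟩, fun h => absurd h (hw.1 α le_rfl), fun h => absurd h (hv.2 α le_rfl)⟩
    · exact iff_of_false (hv.1 β hβ) (hw.1 β (le_of_lt hβ))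
    · exact iff_of_false (hv.2 β (le_of_lt hβ)) (hw.2 β hβ)
  · rintro ⟨hlev, hFα, hTα⟩
    rcases W_cases v with ⟨a, ha, rfl⟩ | rfl | ⟨a, ha, rfl⟩
    · rcases lt_trichotomy a α with h | rfl | h
      · left
        exact (W_ext ((hlev a h).1.1 rfl)).symm
      · by_cases hw : w.1 = TVPre.F a
        · left; exact (W_ext hw).symm
        · right
          refine ⟨le_refl _, WF_lt_WT, ?_⟩
          refine big'_of_ne ?_ ?_
          · intro β hβ hwF
            rcases lt_or_eq_of_le hβ with hβ | rfl
            · have := (hlev β hβ).1.2 hwF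
              simp [WF] at this
              exact absurd this.symm (ne_of_lt hβ)
            · exact hw hwF
          · intro β hβ hwT
            have := (hlev β hβ).2.2 hwT
            simp [WF] at this
      · right
        refine ⟨WF_le_WF.2 (le_of_lt h), WF_lt_WT, ?_⟩
        refine big'_of_ne ?_ ?_
        · intro β hβ hwF
          rcases lt_or_eq_of_le hβ with hβ' | rfl
          · have := (hlev β hβ').1.2 hwF
            simp [WF] at this
            exact absurd this (ne_of_gt (lt_trans hβ' h))
          · have := hFα hwF
            simp [WF] at this
            exact absurd this (ne_of_gt h)
        · intro β hβ hwT
          have := (hlev β hβ).2.2 hwT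
          simp [WF] at this
    · right
      refine ⟨WF_le_WZ, WZ_lt_WT, ?_⟩
      refine big'_of_ne ?_ ?_
      · intro β hβ hwF
        rcases lt_or_eq_of_le hβ with hβ' | rfl
        · have := (hlev β hβ').1.2 hwF
          simp [WZ] at this
        · have := hFα hwF
          simp [WZ] at this
      · intro β hβ hwT
        have := (hlev β hβ).2.2 hwT
        simp [WZ] at this
    · rcases lt_trichotomy a α with h | rfl | h
      · left
        exact (W_ext ((hlev a h).2.1 rfl)).symm
      · left
        exact (W_ext (hTα rfl)).symm
      · right
        refine ⟨WF_le_WT, WT_lt_WT.2 h, ?_⟩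
        refine big'_of_ne ?_ ?_
        · intro β hβ hwF
          rcases lt_or_eq_of_le hβ with hβ' | rfl
          · have := (hlev β hβ').1.2 hwF
            simp [WT] at this
          · have := hFα hwF
            simp [WT] at this
        · intro β hβ hwT
          have := (hlev β hβ).2.2 hwT
          simp [WT] at this
          exact absurd this (ne_of_gt (lt_trans hβ h))

lemma gsq_pair_iff_levels {v w : W} :
    gsq (WF α hα) (WT α hα) v w ∧ gsq (WF α hα) (WT α hα) w v ↔ ∀ β ≤ α, veqAt β v w := by
  rw [gsq_iff_levels, gsq_iff_levels]
  constructor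
  · rintro ⟨⟨h1, h2, h3⟩, ⟨h4, h5, h6⟩⟩
    intro β hβ
    rcases lt_or_eq_of_le hβ with hβ' | rfl
    · exact h1 β hβ'
    · exact ⟨⟨h5, h2⟩, ⟨h3, h6⟩⟩
  · intro h
    refine ⟨⟨fun β hβ => h β (le_of_lt hβ), (h α le_rfl).1.2, (h α le_rfl).2.1⟩,
      ⟨fun β hβ => veqAt_symm (h β (le_of_lt hβ)), (h α le_rfl).1.1, (h α le_rfl).2.2⟩⟩

end Levels

section Bridges

variable {L : Language} {α : Ordinal} {hα : α < omega1}

lemma eqa_iff_pointwise {I J : Interp L} :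
    eqa α I J ↔ ∀ A, ∀ β ≤ α, veqAt β (I A) (J A) := by
  constructor
  · intro h A β hβ
    obtain ⟨hF, hT⟩ := h β hβ
    exact ⟨Set.ext_iff.1 hF A, Set.ext_iff.1 hT A⟩
  · intro h β hβ
    exact ⟨Set.ext fun A => (h A β hβ).1, Set.ext fun A => (h A β hβ).2⟩

lemma eqa_iff_gsq {I J : Interp L} :
    eqa α I J ↔ ∀ A, gsq (WF α hα) (WT α hα) (I A) (J A) ∧
      gsq (WF α hα) (WT α hα) (J A) (I A) := by
  rw [eqa_iff_pointwise]
  exact ⟨fun h A => gsq_pair_iff_levels.2 (h A), fun h A => gsq_pair_iff_levels.1 (h A)⟩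

lemma sqa_iff_gsq {I J : Interp L} :
    sqa α I J ↔ ∀ A, gsq (WF α hα) (WT α hα) (I A) (J A) := by
  constructor
  · rintro ⟨h1, h2, h3⟩ A
    rw [gsq_iff_levels]
    refine ⟨?_, fun h => h2 h, fun h => h3 h⟩
    intro β hβ
    exact (eqa_iff_pointwise.1 (h1 β hβ)) A β le_rfl
  · intro h
    refine ⟨?_, ?_, ?_⟩
    · intro β hβ
      rw [eqa_iff_pointwise]
      intro A γ hγ
      exact ((gsq_iff_levels (hα := hα)).1 (h A)).1 γ (lt_of_le_of_lt hγ hβ)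
    · intro A hA
      exact ((gsq_iff_levels (hα := hα)).1 (h A)).2.1 hA
    · intro A hA
      exact ((gsq_iff_levels (hα := hα)).1 (h A)).2.2 hA

end Bridges


section Iter

variable {L : Language} {P : Program L} {α : Ordinal} {hα : α < omega1} {I : Interp L}

lemma iter_zero : iter P α hα I 0 = I := Ordinal.limitRecOn_zero _ _ _

lemma iter_succ (β : Ordinal) :
    iter P α hα I (Order.succ β) = TP P (iter P α hα I β) :=
  Ordinal.limitRecOn_succ _ _ _ _

lemma iter_add_one (β : Ordinal) :
    iter P α hα I (β + 1) = TP P (iter P α hα I β) := by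
  rw [Ordinal.add_one_eq_succ, iter_succ]

lemma iter_limit {β : Ordinal} (hβ : Order.IsSuccLimit β) (A : GroundAtom L) :
    iter P α hα I β A =
      if degLT (I A) α then I A
      else if ∃ γ, ∃ _ : γ < β, (iter P α hα I γ A).1 = TVPre.T α then WT α hα
      else if ∀ γ, ∀ _ : γ < β, (iter P α hα I γ A).1 = TVPre.F α then WF α hα
      else WF (α + 1) (succ_lt_omega1 hα) := by
  show (iter P α hα I β) A = _
  unfold iter
  exact congrFun (Ordinal.limitRecOn_limit (motive := fun _ => Interp L) _ _ _ _ hβ) A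

lemma degLT_iff {v : W} : degLT v α ↔ (v < WF α hα ∨ WT α hα < v) := by
  rcases W_cases v with ⟨a, ha, rfl⟩ | rfl | ⟨a, ha, rfl⟩
  · show a < α ↔ _
    simp only [WF_lt_WF]
    exact ⟨Or.inl, fun h => h.elim id (fun h => absurd h not_WT_lt_WF)⟩
  · show False ↔ _
    constructor
    · exact False.elim
    · rintro (h | h)
      · exact not_WZ_lt_WF h
      · exact not_WT_lt_WZ h
  · show a < α ↔ _
    simp only [WT_lt_WT]
    constructor
    · exact fun h => Or.inr h
    · rintro (h | h)
      · exact absurd h (by exact not_WT_lt_WF)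
      · exact h
  
lemma not_degLT_iff {v : W} : ¬ degLT v α ↔ (WF α hα ≤ v ∧ v ≤ WT α hα) := by
  rw [degLT_iff (hα := hα)]
  push_neg
  exact Iff.rfl

lemma gsq_eq_of_degLT_left {v w : W} (h : gsq (WF α hα) (WT α hα) v w)
    (hd : degLT v α) : w = v := by
  rcases h with rfl | hbig
  · rfl
  · rcases degLT_iff.1 hd with h' | h'
    · exact absurd (lt_of_le_of_lt hbig.1 h') (lt_irrefl _)
    · exact absurd (lt_trans h' hbig.2.1) (lt_irrefl _)

lemma gsq_eq_of_degLT_right {v w : W} (h : gsq (WF α hα) (WT α hα) v w)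
    (hd : degLT w α) : v = w := by
  rcases h with rfl | hbig
  · rfl
  · rcases degLT_iff.1 hd with h' | h'
    · exact absurd (lt_trans hbig.2.2.1 h') (lt_irrefl _)
    · exact absurd (lt_of_le_of_lt hbig.2.2.2 h') (lt_irrefl _)

lemma gsq_WT_eq {x : W} (h : gsq (WF α hα) (WT α hα) (WT α hα) x) : x = WT α hα := by
  rcases h with h | hbig
  · exact h.symm
  · exact absurd hbig.2.1 (lt_irrefl _)

lemma gsq_WF_eq {x : W} (h : gsq (WF α hα) (WT α hα) x (WF α hα)) : x = WF α hα := by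
  rcases h with h | hbig
  · exact h
  · exact absurd hbig.2.2.1 (lt_irrefl _)

/-- Pointwise `⊑_α`. -/
def Pgsq (α : Ordinal) (hα : α < omega1) (I J : Interp L) : Prop :=
  ∀ A, gsq (WF α hα) (WT α hα) (I A) (J A)

lemma Pgsq_refl {J : Interp L} : Pgsq α hα J J := fun _ => gsq_refl

lemma Pgsq_trans {I J K : Interp L} (h1 : Pgsq α hα I J) (h2 : Pgsq α hα J K) :
    Pgsq α hα I K := fun A => gsq_trans (h1 A) (h2 A)

/-- The main invariant of the transfinite iteration. -/
lemma iter_invariant (hI : Pgsq α hα I (TP P I)) (β : Ordinal) :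
    (∀ γ ≤ β, Pgsq α hα (iter P α hα I γ) (iter P α hα I β)) ∧
      Pgsq α hα (iter P α hα I β) (TP P (iter P α hα I β)) := by
  induction β using Ordinal.induction with
  | _ β IH =>
  rcases Ordinal.zero_or_succ_or_isSuccLimit β with rfl | ⟨γ, rfl⟩ | hlim
  · constructor
    · intro γ hγ
      rw [nonpos_iff_eq_zero.1 hγ]
      exact Pgsq_refl
    · rw [iter_zero]
      exact hI
  · obtain ⟨hch, hq⟩ := IH γ (Order.lt_succ γ)
    have hq' : Pgsq α hα (iter P α hα I γ) (iter P α hα I (Order.succ γ)) := by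
      rw [iter_succ]
      exact hq
    constructor
    · intro δ hδ
      rcases eq_or_lt_of_le hδ with rfl | hδ'
      · exact Pgsq_refl
      · exact Pgsq_trans (hch δ (Order.lt_succ_iff.1 hδ')) hq'
    · rw [iter_succ]
      intro A
      exact TP_gsq hq A
  · have hchain : ∀ γ < β, Pgsq α hα (iter P α hα I γ) (iter P α hα I β) := by
      intro γ hγ A
      have hIγ : gsq (WF α hα) (WT α hα) (I A) (iter P α hα I γ A) := by
        have := (IH γ hγ).1 0 zero_le
        rw [iter_zero] at this
        exact this A
      have hbnd : ¬ degLT (I A) α →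
          WF α hα ≤ iter P α hα I γ A ∧ iter P α hα I γ A ≤ WT α hα := by
        intro h1
        rcases hIγ with he | hbig
        · rw [← he]
          exact not_degLT_iff.1 h1
        · exact ⟨le_of_lt hbig.2.2.1, hbig.2.2.2⟩
      rw [iter_limit hlim A]
      split_ifs with h1 h2 h3
      · rw [gsq_eq_of_degLT_left hIγ h1]
        exact gsq_refl
      · by_cases he : iter P α hα I γ A = WT α hα
        · rw [he]; exact gsq_refl
        · exact Or.inr ⟨(hbnd h1).1, lt_of_le_of_ne (hbnd h1).2 he,
            WF_lt_WT, le_refl _⟩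
      · rw [W_ext (w := WF α hα) (h3 γ hγ)]
        exact gsq_refl
      · by_cases he : iter P α hα I γ A = WF (α + 1) (succ_lt_omega1 hα)
        · rw [he]; exact gsq_refl
        · have hne : iter P α hα I γ A ≠ WT α hα := by
            intro hT
            exact h2 ⟨γ, hγ, by rw [hT]; rfl⟩
          exact Or.inr ⟨(hbnd h1).1, lt_of_le_of_ne (hbnd h1).2 hne,
            WF_lt_WF.2 (lt_add_one α), WF_le_WT⟩
    refine ⟨?_, ?_⟩
    · intro γ hγ
      rcases eq_or_lt_of_le hγ with rfl | hγ'
      · exact Pgsq_refl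
      · exact hchain γ hγ'
    · intro A
      have hIβ : Pgsq α hα I (iter P α hα I β) := by
        have := hchain 0 hlim.pos
        rw [iter_zero] at this
        exact this
      have hIx : gsq (WF α hα) (WT α hα) (I A) (TP P (iter P α hα I β) A) :=
        gsq_trans (hI A) (TP_gsq hIβ A)
      have hbnd : ¬ degLT (I A) α →
          WF α hα ≤ TP P (iter P α hα I β) A ∧ TP P (iter P α hα I β) A ≤ WT α hα := by
        intro h1
        rcases hIx with he | hbig
        · rw [← he]
          exact not_degLT_iff.1 h1
        · exact ⟨le_of_lt hbig.2.2.1, hbig.2.2.2⟩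
      have hstep : ∀ γ < β, gsq (WF α hα) (WT α hα) (iter P α hα I γ A)
          (TP P (iter P α hα I β) A) := by
        intro γ hγ
        refine gsq_trans ?_ (TP_gsq (hchain γ hγ) A)
        have := (IH (Order.succ γ) (hlim.succ_lt hγ)).1 γ (le_of_lt (Order.lt_succ γ))
        have h2 := this A
        rw [iter_succ] at h2
        exact h2
      rw [iter_limit hlim A]
      split_ifs with h1 h2 h3
      · exact gsq_trans (hI A) (TP_gsq hIβ A)
      · obtain ⟨γ, hγ, hT⟩ := h2
        have h4 := hstep γ hγ
        rw [W_ext (w := WT α hα) hT] at h4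
        rw [gsq_WT_eq h4]
        exact gsq_refl
      · by_cases he : TP P (iter P α hα I β) A = WF α hα
        · rw [he]; exact gsq_refl
        · exact Or.inr ⟨le_refl _, WF_lt_WT,
            lt_of_le_of_ne (hbnd h1).1 (Ne.symm he), (hbnd h1).2⟩
      · by_cases he : TP P (iter P α hα I β) A = WF (α + 1) (succ_lt_omega1 hα)
        · rw [he]; exact gsq_refl
        · push_neg at h3
          obtain ⟨γ, hγ, hne⟩ := h3
          have hx : TP P (iter P α hα I β) A ≠ WF α hα := by
            intro hFx
            have h4 := hstep γ hγ
            rw [hFx] at h4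
            exact hne (by rw [gsq_WF_eq h4]; rfl)
          exact Or.inr ⟨WF_le_WF.2 (le_of_lt (lt_add_one α)), WF_lt_WT,
            lt_of_le_of_ne (hbnd h1).1 (Ne.symm hx), (hbnd h1).2⟩

end Iter


section CountableInstances

variable {L : Language}

/-- An injective coding of terms into `ℕ`. -/
def Term.code : Term L → ℕ
  | .var n => Nat.pair 0 n
  | .const c => Nat.pair 1 c.val
  | .func f ts => Nat.pair 2 (Nat.pair f.val
      (Encodable.encode (List.ofFn fun i => (ts i).code)))

lemma Term.code_inj : ∀ t1 t2 : Term L, t1.code = t2.code → t1 = t2 := by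
  intro t1
  induction t1 with
  | var n =>
    intro t2 h
    cases t2 with
    | var m =>
      simp only [Term.code, Nat.pair_eq_pair] at h
      rw [h.2]
    | const c => simp only [Term.code, Nat.pair_eq_pair] at h; exact absurd h.1 (by decide)
    | func f ts => simp only [Term.code, Nat.pair_eq_pair] at h; exact absurd h.1 (by decide)
  | const c =>
    intro t2 h
    cases t2 with
    | var m => simp only [Term.code, Nat.pair_eq_pair] at h; exact absurd h.1 (by decide)
    | const c' =>
      simp only [Term.code, Nat.pair_eq_pair] at h
      rw [Fin.ext h.2]
    | func f ts => simp only [Term.code, Nat.pair_eq_pair] at h; exact absurd h.1 (by decide)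
  | func f ts ih =>
    intro t2 h
    cases t2 with
    | var m => simp only [Term.code, Nat.pair_eq_pair] at h; exact absurd h.1 (by decide)
    | const c => simp only [Term.code, Nat.pair_eq_pair] at h; exact absurd h.1 (by decide)
    | func f' ts' =>
      simp only [Term.code, Nat.pair_eq_pair] at h
      obtain ⟨-, hf, hl⟩ := h
      have hf' : f = f' := Fin.ext hf
      subst hf'
      have hlist := Encodable.encode_injective hl
      have hfun := List.ofFn_inj.1 hlist
      have : ts = ts' := by
        funext i
        exact ih i (ts' i) (congrFun hfun i)
      rw [this]

instance : Countable (Term L) :=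
  ⟨⟨Term.code, fun _ _ h => Term.code_inj _ _ h⟩⟩

instance : Countable (HU L) := Subtype.countable

instance : Countable (GroundAtom L) := by
  have : Function.Injective (fun A : GroundAtom L =>
      (⟨A.pred, A.args⟩ : Σ p : Fin L.nPred, (Fin (L.predAr p) → HU L))) := by
    rintro ⟨p1, a1⟩ ⟨p2, a2⟩ h
    obtain ⟨h1, h2⟩ := Sigma.mk.inj_iff.1 h
    subst h1
    obtain rfl : a1 = a2 := eq_of_heq h2
    rfl
  exact this.countable

end CountableInstances

section SupCountable

lemma iSup_lt_omega1 {ι : Type} [Countable ι] (f : ι → Ordinal.{0})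
    (hf : ∀ i, f i < omega1) : iSup f < omega1 := by
  have h1 : omega1 = (Cardinal.aleph 1).ord := by
    rw [Cardinal.ord_aleph]
    rfl
  rw [h1] at hf ⊢
  rw [← h1] at hf ⊢; exact Ordinal.iSup_lt_omega_one hf

end SupCountable


section Fixpoint

variable {L : Language} {P : Program L} {α : Ordinal} {hα : α < omega1} {I : Interp L}

lemma degLT_ne (hα : α < omega1) {v : W} (hd : degLT v α) :
    v.1 ≠ TVPre.F α ∧ v.1 ≠ TVPre.T α := by
  rcases degLT_iff (hα := hα) |>.1 hd with h | h
  · obtain ⟨b, hb, hba, rfl⟩ := le_WF_cases (le_of_lt h)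
    have hb' : b < α := WF_lt_WF.1 h
    constructor
    · intro hc
      simp only [WF] at hc
      exact absurd (TVPre.F.inj hc) (ne_of_lt hb')
    · intro hc
      simp only [WF] at hc
      cases hc
  · obtain ⟨b, hb, hba, rfl⟩ := WT_le_cases (le_of_lt h)
    have hb' : b < α := WT_lt_WT.1 h
    constructor
    · intro hc
      simp only [WT] at hc
      cases hc
    · intro hc
      simp only [WT] at hc
      exact absurd (TVPre.T.inj hc) (ne_of_lt hb')

lemma no_small_of_bounds {v : W} (h1 : WF α hα ≤ v) (h2 : v ≤ WT α hα) :
    ∀ β < α, v.1 ≠ TVPre.F β ∧ v.1 ≠ TVPre.T β := by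
  intro β hβ
  constructor
  · intro hc
    have : v = WF β (lt_trans hβ hα) := W_ext hc
    rw [this] at h1
    exact absurd (lt_of_le_of_lt (WF_le_WF.1 h1) hβ) (lt_irrefl _)
  · intro hc
    have : v = WT β (lt_trans hβ hα) := W_ext hc
    rw [this] at h2
    exact absurd (lt_of_le_of_lt (WT_le_WT.1 h2) hβ) (lt_irrefl _)

lemma gsq_bounds {v w : W} (h : gsq (WF α hα) (WT α hα) v w)
    (hv1 : WF α hα ≤ v) (hv2 : v ≤ WT α hα) :
    WF α hα ≤ w ∧ w ≤ WT α hα := by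
  rcases h with rfl | hbig
  · exact ⟨hv1, hv2⟩
  · exact ⟨le_of_lt hbig.2.2.1, hbig.2.2.2⟩

lemma iter_start_gsq (hI : Pgsq α hα I (TP P I)) (β : Ordinal) (A : GroundAtom L) :
    gsq (WF α hα) (WT α hα) (I A) (iter P α hα I β A) := by
  have := (iter_invariant hI β).1 0 zero_le
  rw [iter_zero] at this
  exact this A

/-- Values of iterates have no degree `< α`, unless the start does. -/
lemma iter_bounds (hI : Pgsq α hα I (TP P I)) (β : Ordinal) (A : GroundAtom L)
    (h1 : ¬ degLT (I A) α) :
    WF α hα ≤ iter P α hα I β A ∧ iter P α hα I β A ≤ WT α hα :=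
  gsq_bounds (iter_start_gsq hI β A) (not_degLT_iff.1 h1).1 (not_degLT_iff.1 h1).2

/-- Case analysis for the value of the `ω₁`-th iterate. -/
lemma iter_omega1_cases (A : GroundAtom L) :
    (degLT (I A) α ∧ iter P α hα I omega1 A = I A) ∨
    (¬ degLT (I A) α ∧
      (iter P α hα I omega1 A = WT α hα ∨ iter P α hα I omega1 A = WF α hα ∨
        iter P α hα I omega1 A = WF (α + 1) (succ_lt_omega1 hα))) := by
  rw [iter_limit omega1_isLimit A]
  split_ifs with h1 h2 h3
  · exact Or.inl ⟨h1, rfl⟩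
  · exact Or.inr ⟨h1, Or.inl rfl⟩
  · exact Or.inr ⟨h1, Or.inr (Or.inl rfl)⟩
  · exact Or.inr ⟨h1, Or.inr (Or.inr rfl)⟩

/-- The `ω₁`-th iterate is a fixpoint of `T_P` up to level `α`. -/
lemma iter_omega1_eqa (hI : Pgsq α hα I (TP P I)) :
    eqa α (iter P α hα I omega1) (TP P (iter P α hα I omega1)) := by
  classical
  let gT : GroundAtom L → Ordinal := fun A =>
    if h : ∃ γ, ∃ _ : γ < omega1, (iter P α hα I γ A).1 = TVPre.T α then h.choose else 0
  let gF : GroundAtom L → Ordinal := fun A =>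
    if h : ∃ γ, ∃ _ : γ < omega1, (iter P α hα I γ A).1 ≠ TVPre.F α then h.choose else 0
  have hgT : ∀ A, gT A < omega1 := by
    intro A
    simp only [gT]
    split_ifs with h
    · exact h.choose_spec.choose
    · exact zero_lt_omega1
  have hgF : ∀ A, gF A < omega1 := by
    intro A
    simp only [gF]
    split_ifs with h
    · exact h.choose_spec.choose
    · exact zero_lt_omega1
  have hgTval : ∀ A, (∃ γ, ∃ _ : γ < omega1, (iter P α hα I γ A).1 = TVPre.T α) →
      (iter P α hα I (gT A) A).1 = TVPre.T α := by
    intro A hEx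
    have : gT A = hEx.choose := dif_pos hEx
    rw [this]
    exact hEx.choose_spec.choose_spec
  have hgFval : ∀ A, (∃ γ, ∃ _ : γ < omega1, (iter P α hα I γ A).1 ≠ TVPre.F α) →
      (iter P α hα I (gF A) A).1 ≠ TVPre.F α := by
    intro A hEx
    have : gF A = hEx.choose := dif_pos hEx
    rw [this]
    exact hEx.choose_spec.choose_spec
  obtain ⟨δ, hδ, hgTδ, hgFδ⟩ : ∃ δ, δ < omega1 ∧ (∀ A, gT A ≤ δ) ∧ (∀ A, gF A ≤ δ) := by
    refine ⟨iSup (fun A => max (gT A) (gF A)), ?_, ?_, ?_⟩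
    · exact iSup_lt_omega1 _ (fun A => max_lt (hgT A) (hgF A))
    · exact fun A => le_trans (le_max_left _ _)
        (Ordinal.le_iSup (fun A => max (gT A) (gF A)) A)
    · exact fun A => le_trans (le_max_right _ _)
        (Ordinal.le_iSup (fun A => max (gT A) (gF A)) A)
  -- main claims for any η with δ ≤ η < ω₁
  have key : ∀ η, δ ≤ η → η < omega1 → ∀ A,
      ((iter P α hα I omega1 A).1 = TVPre.T α ↔ (iter P α hα I η A).1 = TVPre.T α) ∧
      ((iter P α hα I omega1 A).1 = TVPre.F α ↔ (iter P α hα I η A).1 = TVPre.F α) := by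
    intro η hδη hη A
    have hchainη : gsq (WF α hα) (WT α hα) (iter P α hα I η A) (iter P α hα I omega1 A) :=
      (iter_invariant hI omega1).1 η (le_of_lt hη) A
    constructor
    · constructor
      · intro hT
        have hEx : ∃ γ, ∃ _ : γ < omega1, (iter P α hα I γ A).1 = TVPre.T α := by
          rw [iter_limit omega1_isLimit A] at hT
          split_ifs at hT with h1 h2 h3
          · exact absurd hT (degLT_ne hα h1).2
          · exact h2
          · exact absurd hT (by simp [WF])
          · exact absurd hT (by simp [WF])
        have hval := hgTval A hEx
        have hch : gsq (WF α hα) (WT α hα) (iter P α hα I (gT A) A) (iter P α hα I η A) :=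
          (iter_invariant hI η).1 (gT A) (le_trans (hgTδ A) hδη) A
        rw [W_ext (w := WT α hα) hval] at hch
        rw [gsq_WT_eq hch]
        rfl
      · intro hT
        have hch := hchainη
        rw [W_ext (w := WT α hα) hT] at hch
        rw [gsq_WT_eq hch]
        rfl
    · constructor
      · intro hF
        rw [iter_limit omega1_isLimit A] at hF
        split_ifs at hF with h1 h2 h3
        · exact absurd hF (degLT_ne hα h1).1
        · exact absurd hF (by simp [WT])
        · exact h3 η hη
        · exact absurd hF (by
            intro hc
            simp only [WF] at hc
            exact absurd (TVPre.F.inj hc).symm (ne_of_lt (lt_add_one α)))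
      · intro hF
        by_contra hc
        have hEx : ∃ γ, ∃ _ : γ < omega1, (iter P α hα I γ A).1 ≠ TVPre.F α := by
          rw [iter_limit omega1_isLimit A] at hc
          split_ifs at hc with h1 h2 h3
          · have heq : iter P α hα I η A = I A :=
              gsq_eq_of_degLT_left (iter_start_gsq hI η A) h1
            rw [heq] at hF
            exact absurd hF (degLT_ne hα h1).1
          · obtain ⟨γ, hγ, hTγ⟩ := h2
            exact ⟨γ, hγ, by rw [hTγ]; simp⟩
          · exact absurd rfl hc
          · push_neg at h3
            obtain ⟨γ, hγ, hne⟩ := h3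
            exact ⟨γ, hγ, hne⟩
        have hval := hgFval A hEx
        have hch : gsq (WF α hα) (WT α hα) (iter P α hα I (gF A) A) (iter P α hα I η A) :=
          (iter_invariant hI η).1 (gF A) (le_trans (hgFδ A) hδη) A
        rw [W_ext (w := WF α hα) hF] at hch
        exact hval (by rw [gsq_WF_eq hch]; rfl)
  -- from the claims: eqa α (iter η) (iter ω₁)
  have keyeq : ∀ η, δ ≤ η → η < omega1 →
      eqa α (iter P α hα I η) (iter P α hα I omega1) := by
    intro η hδη hη
    rw [eqa_iff_pointwise]
    intro A β hβ
    rcases lt_or_eq_of_le hβ with hβ' | rfl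
    · by_cases hd : degLT (I A) α
      · have he1 : iter P α hα I η A = I A :=
          gsq_eq_of_degLT_left (iter_start_gsq hI η A) hd
        have he2 : iter P α hα I omega1 A = I A :=
          gsq_eq_of_degLT_left (iter_start_gsq hI omega1 A) hd
        rw [he1, he2]
        exact veqAt_refl
      · have hb1 := iter_bounds (hα := hα) hI η A hd
        have hb2 := iter_bounds (hα := hα) hI omega1 A hd
        have hn1 := no_small_of_bounds hb1.1 hb1.2 β hβ'
        have hn2 := no_small_of_bounds hb2.1 hb2.2 β hβ'
        exact ⟨iff_of_false hn1.1 hn2.1, iff_of_false hn1.2 hn2.2⟩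
    · exact ⟨((key η hδη hη A).2).symm, ((key η hδη hη A).1).symm⟩
  have hδ1 : δ + 1 < omega1 := succ_lt_omega1 hδ
  have he1 : eqa α (iter P α hα I δ) (iter P α hα I omega1) := keyeq δ le_rfl hδ
  have he2 : eqa α (iter P α hα I (δ + 1)) (iter P α hα I omega1) :=
    keyeq (δ + 1) (le_of_lt (lt_add_one δ)) hδ1
  have he3 : eqa α (TP P (iter P α hα I δ)) (TP P (iter P α hα I omega1)) := by
    rw [eqa_iff_gsq (hα := hα)] at he1 ⊢
    intro A
    exact ⟨TP_gsq (fun B => (he1 B).1) A, TP_gsq (fun B => (he1 B).2) A⟩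
  have he4 : iter P α hα I (δ + 1) = TP P (iter P α hα I δ) := iter_add_one δ
  rw [eqa_iff_pointwise] at he2 he3 ⊢
  intro A β hβ
  have h2 := he2 A β hβ
  have h3 := he3 A β hβ
  rw [he4] at h2
  exact veqAt_trans (veqAt_symm h2) h3

end Fixpoint


section MoreHelpers

variable {L : Language} {P : Program L} {α β : Ordinal} {hα : α < omega1} {I J K : Interp L}

lemma eqa_refl : eqa β I I := fun _ _ => ⟨rfl, rfl⟩

lemma eqa_symm (h : eqa β I J) : eqa β J I :=
  fun γ hγ => ⟨((h γ hγ).1).symm, ((h γ hγ).2).symm⟩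

lemma eqa_trans (h1 : eqa β I J) (h2 : eqa β J K) : eqa β I K :=
  fun γ hγ => ⟨((h1 γ hγ).1).trans ((h2 γ hγ).1), ((h1 γ hγ).2).trans ((h2 γ hγ).2)⟩

lemma eqa_mono (hβα : β ≤ α) (h : eqa α I J) : eqa β I J :=
  fun γ hγ => h γ (le_trans hγ hβα)

lemma eqa_TP (hα : α < omega1) (h : eqa α I J) : eqa α (TP P I) (TP P J) := by
  rw [eqa_iff_gsq (hα := hα)] at h ⊢
  intro A
  exact ⟨TP_gsq (fun B => (h B).1) A, TP_gsq (fun B => (h B).2) A⟩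

lemma degLT_of_idx {v : W} {ζ : Ordinal} (hζω : ζ < omega1)
    (h : v.1 = TVPre.F ζ ∨ v.1 = TVPre.T ζ) (hζ : ζ < α) : degLT v α := by
  rcases h with h | h
  · rw [W_ext (w := WF ζ hζω) h]
    exact hζ
  · rw [W_ext (w := WT ζ hζω) h]
    exact hζ

lemma lt_add_one_iff_le {β : Ordinal} (h : β < α + 1) : β ≤ α := by
  rw [Ordinal.add_one_eq_succ, Order.lt_succ_iff] at h
  exact h

/-- The `ω₁`-th iterate satisfies `N ⊑_{α+1} T_P(N)`. -/
lemma iter_omega1_sqa_succ (hI : Pgsq α hα I (TP P I)) :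
    sqa (α + 1) (iter P α hα I omega1) (TP P (iter P α hα I omega1)) := by
  have heq := iter_omega1_eqa hI
  have heqp := eqa_iff_pointwise.1 heq
  refine ⟨?_, ?_, ?_⟩
  · intro β hβ
    exact eqa_mono (lt_add_one_iff_le hβ) heq
  · intro A hA
    have hA' : (TP P (iter P α hα I omega1) A).1 = TVPre.F (α + 1) := hA
    show (iter P α hα I omega1 A).1 = TVPre.F (α + 1)
    rcases iter_omega1_cases (hα := hα) (P := P) (I := I) A with ⟨hd, he⟩ | ⟨hd, he⟩
    · exfalso
      rcases (degLT_iff (hα := hα)).1 hd with h | h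
      · obtain ⟨b, hb, hba, hIb⟩ := le_WF_cases (le_of_lt h)
        have hbα : b < α := by rw [hIb] at h; exact WF_lt_WF.1 h
        have hNb : (iter P α hα I omega1 A).1 = TVPre.F b := by
          rw [he, hIb]; rfl
        have := (heqp A b (le_of_lt hbα)).1.1 hNb
        rw [hA'] at this
        exact absurd (TVPre.F.inj this) (ne_of_gt (lt_trans hbα (lt_add_one α)))
      · obtain ⟨b, hb, hba, hIb⟩ := WT_le_cases (le_of_lt h)
        have hbα : b < α := by rw [hIb] at h; exact WT_lt_WT.1 h
        have hNb : (iter P α hα I omega1 A).1 = TVPre.T b := by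
          rw [he, hIb]; rfl
        have := (heqp A b (le_of_lt hbα)).2.1 hNb
        rw [hA'] at this
        cases this
    · rcases he with he | he | he
      · exfalso
        have hNb : (iter P α hα I omega1 A).1 = TVPre.T α := by rw [he]; rfl
        have := (heqp A α le_rfl).2.1 hNb
        rw [hA'] at this
        cases this
      · exfalso
        have hNb : (iter P α hα I omega1 A).1 = TVPre.F α := by rw [he]; rfl
        have := (heqp A α le_rfl).1.1 hNb
        rw [hA'] at this
        exact absurd (TVPre.F.inj this).symm (ne_of_lt (lt_add_one α))
      · rw [he]; rfl
  · intro A hA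
    exfalso
    have hA' : (iter P α hα I omega1 A).1 = TVPre.T (α + 1) := hA
    rcases iter_omega1_cases (hα := hα) (P := P) (I := I) A with ⟨hd, he⟩ | ⟨hd, he⟩
    · rcases (degLT_iff (hα := hα)).1 hd with h | h
      · obtain ⟨b, hb, hba, hIb⟩ := le_WF_cases (le_of_lt h)
        rw [he, hIb] at hA'
        cases hA'
      · obtain ⟨b, hb, hba, hIb⟩ := WT_le_cases (le_of_lt h)
        have hbα : b < α := by rw [hIb] at h; exact WT_lt_WT.1 h
        rw [he, hIb] at hA'
        have : b = α + 1 := TVPre.T.inj hA'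
        exact absurd this (ne_of_lt (lt_trans hbα (lt_add_one α)))
    · rcases he with he | he | he
      · rw [he] at hA'
        have : α = α + 1 := TVPre.T.inj hA'
        exact absurd this (ne_of_lt (lt_add_one α))
      · rw [he] at hA'
        cases hA'
      · rw [he] at hA'
        cases hA'

end MoreHelpers


section UnionInterp

variable {L : Language} {α : Ordinal} {hα : α < omega1}

lemma unionInterp_pos {Ig : ∀ γ, γ < α → Interp L} {A : GroundAtom L}
    (h : ∃ ζ, ∃ hζ : ζ < α, ((Ig ζ hζ) A).1 = TVPre.F ζ ∨ ((Ig ζ hζ) A).1 = TVPre.T ζ) :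
    ∃ ζ, ∃ hζ : ζ < α, unionInterp α hα Ig A = Ig ζ hζ A ∧
      (((Ig ζ hζ) A).1 = TVPre.F ζ ∨ ((Ig ζ hζ) A).1 = TVPre.T ζ) := by
  refine ⟨h.choose, h.choose_spec.choose, ?_, h.choose_spec.choose_spec⟩
  simp only [unionInterp]
  rw [dif_pos h]

lemma unionInterp_neg {Ig : ∀ γ, γ < α → Interp L} {A : GroundAtom L}
    (h : ¬ ∃ ζ, ∃ hζ : ζ < α, ((Ig ζ hζ) A).1 = TVPre.F ζ ∨ ((Ig ζ hζ) A).1 = TVPre.T ζ) :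
    unionInterp α hα Ig A = WF α hα := by
  simp only [unionInterp]
  rw [dif_neg h]

end UnionInterp

/-- properties of the approximants `M_α`. -/
theorem approx_properties {L : Language} (P : Program L) (α : Ordinal)
    (hα : α < omega1) :
    (∀ γ < α, eqa γ (approx P γ) (approx P α)) ∧
    sqa α (unionInterp α hα fun γ _ => approx P γ)
      (TP P (unionInterp α hα fun γ _ => approx P γ)) ∧
    approx P α = iter P α hα (unionInterp α hα fun γ _ => approx P γ) omega1 ∧
    sqa (α + 1) (approx P α) (TP P (approx P α)) := by
  induction α using Ordinal.induction with
  | _ α IH => ?_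
  have hγω : ∀ γ, γ < α → γ < omega1 := fun γ hγ => lt_trans hγ hα
  have C1 : ∀ γ, ∀ _ : γ < α, ∀ ζ, ζ < γ → eqa ζ (approx P ζ) (approx P γ) :=
    fun γ hγ ζ hζ => (IH γ hγ (hγω γ hγ)).1 ζ hζ
  -- the existence condition used by `unionInterp`
  let cond : GroundAtom L → Prop := fun A =>
    ∃ ζ, ∃ _ : ζ < α, ((approx P ζ) A).1 = TVPre.F ζ ∨ ((approx P ζ) A).1 = TVPre.T ζ
  -- downward transfer of values of exact degree
  have keyval : ∀ ζ γ, ζ ≤ γ → γ < α → ∀ A : GroundAtom L,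
      ((approx P ζ A).1 = TVPre.F ζ ∨ (approx P ζ A).1 = TVPre.T ζ) →
      approx P γ A = approx P ζ A := by
    intro ζ γ hle hγ A hc
    have heq : eqa ζ (approx P ζ) (approx P γ) := by
      rcases lt_or_eq_of_le hle with h | rfl
      · exact C1 γ hγ ζ h
      · exact eqa_refl
    have hζω : ζ < omega1 := lt_trans (lt_of_le_of_lt hle hγ) hα
    rcases hc with h | h
    · have h2 := (eqa_iff_pointwise.1 heq A ζ le_rfl).1.1 h
      exact (W_ext (w := WF ζ hζω) h2).trans (W_ext (w := WF ζ hζω) h).symm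
    · have h2 := (eqa_iff_pointwise.1 heq A ζ le_rfl).2.1 h
      exact (W_ext (w := WT ζ hζω) h2).trans (W_ext (w := WT ζ hζω) h).symm
  -- downward transfer (from level `γ` down to level `β`)
  have down : ∀ β γ, β ≤ γ → γ < α → ∀ A : GroundAtom L,
      ((approx P γ A).1 = TVPre.F β → (approx P β A).1 = TVPre.F β) ∧
      ((approx P γ A).1 = TVPre.T β → (approx P β A).1 = TVPre.T β) := by
    intro β γ hle hγ A
    have heq : eqa β (approx P β) (approx P γ) := by
      rcases lt_or_eq_of_le hle with h | rfl
      · exact C1 γ hγ β h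
      · exact eqa_refl
    have h := eqa_iff_pointwise.1 heq A β le_rfl
    exact ⟨h.1.2, h.2.2⟩
  -- Lemma: eqa γ (approx P γ) J for all γ < α
  have U1 : ∀ γ, γ < α → eqa γ (approx P γ) (unionInterp α hα fun γ _ => approx P γ) := by
    intro γ hγ
    rw [eqa_iff_pointwise]
    intro A β hβ
    by_cases hEx : cond A
    · obtain ⟨ζ, hζα, hJA, hcond⟩ := unionInterp_pos (hα := hα) hEx
      rcases le_or_gt ζ γ with hle | hlt
      · rw [hJA, keyval ζ γ hle hγ A hcond]
        exact veqAt_refl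
      · have heq := (IH ζ hζα (hγω ζ hζα)).1 γ hlt
        rw [hJA]
        exact eqa_iff_pointwise.1 heq A β hβ
    · rw [unionInterp_neg (hα := hα) hEx]
      have hβα : β < α := lt_of_le_of_lt hβ hγ
      have hR1 : (WF α hα : W).1 ≠ TVPre.F β := by
        intro hc
        simp only [WF] at hc
        exact absurd (TVPre.F.inj hc) (ne_of_gt hβα)
      have hR2 : (WF α hα : W).1 ≠ TVPre.T β := by
        intro hc
        simp only [WF] at hc
        cases hc
      have hL1 : (approx P γ A).1 ≠ TVPre.F β := by
        intro hc
        exact hEx ⟨β, hβα, Or.inl ((down β γ hβ hγ A).1 hc)⟩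
      have hL2 : (approx P γ A).1 ≠ TVPre.T β := by
        intro hc
        exact hEx ⟨β, hβα, Or.inr ((down β γ hβ hγ A).2 hc)⟩
      exact ⟨iff_of_false hL1 hR1, iff_of_false hL2 hR2⟩
  -- Property (2)
  have P2 : sqa α (unionInterp α hα fun γ _ => approx P γ)
      (TP P (unionInterp α hα fun γ _ => approx P γ)) := by
    rw [sqa_iff_gsq (hα := hα)]
    intro A
    by_cases hEx : cond A
    · obtain ⟨ζ, hζα, hJA, hcond⟩ := unionInterp_pos (hα := hα) hEx
      have hζω : ζ < omega1 := hγω ζ hζα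
      have h4 := (IH ζ hζα hζω).2.2.2
      have heqζ : eqa ζ (approx P ζ) (TP P (approx P ζ)) := h4.1 ζ (lt_add_one ζ)
      have hU1ζ := U1 ζ hζα
      have heqTP : eqa ζ (TP P (approx P ζ))
          (TP P (unionInterp α hα fun γ _ => approx P γ)) := eqa_TP hζω hU1ζ
      have hval : (TP P (unionInterp α hα fun γ _ => approx P γ)) A = approx P ζ A := by
        rcases hcond with h | h
        · have h2 := (eqa_iff_pointwise.1 heqζ A ζ le_rfl).1.1 h
          have h3 := (eqa_iff_pointwise.1 heqTP A ζ le_rfl).1.1 h2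
          exact (W_ext (w := WF ζ hζω) h3).trans (W_ext (w := WF ζ hζω) h).symm
        · have h2 := (eqa_iff_pointwise.1 heqζ A ζ le_rfl).2.1 h
          have h3 := (eqa_iff_pointwise.1 heqTP A ζ le_rfl).2.1 h2
          exact (W_ext (w := WT ζ hζω) h3).trans (W_ext (w := WT ζ hζω) h).symm
      rw [hJA, hval]
      exact gsq_refl
    · rw [unionInterp_neg (hα := hα) hEx]
      by_cases he : TP P (unionInterp α hα fun γ _ => approx P γ) A = WF α hα
      · rw [he]
        exact gsq_refl
      · have hF : ∀ β ≤ α,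
            (TP P (unionInterp α hα fun γ _ => approx P γ) A).1 ≠ TVPre.F β := by
          intro β hβ hc
          rcases lt_or_eq_of_le hβ with hβα | rfl
          · have hβω : β < omega1 := hγω β hβα
            have h1 := U1 β hβα
            have h2 : eqa β (TP P (approx P β))
                (TP P (unionInterp α hα fun γ _ => approx P γ)) := eqa_TP hβω h1
            have h3 := (eqa_iff_pointwise.1 h2 A β le_rfl).1.2 hc
            have h4 := (IH β hβα hβω).2.2.2.1 β (lt_add_one β)
            have h5 := (eqa_iff_pointwise.1 h4 A β le_rfl).1.2 h3
            exact hEx ⟨β, hβα, Or.inl h5⟩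
          · exact he (W_ext (w := WF β hα) hc)
        have hT : ∀ β < α,
            (TP P (unionInterp α hα fun γ _ => approx P γ) A).1 ≠ TVPre.T β := by
          intro β hβα hc
          have hβω : β < omega1 := hγω β hβα
          have h1 := U1 β hβα
          have h2 : eqa β (TP P (approx P β))
              (TP P (unionInterp α hα fun γ _ => approx P γ)) := eqa_TP hβω h1
          have h3 := (eqa_iff_pointwise.1 h2 A β le_rfl).2.2 hc
          have h4 := (IH β hβα hβω).2.2.2.1 β (lt_add_one β)
          have h5 := (eqa_iff_pointwise.1 h4 A β le_rfl).2.2 h3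
          exact hEx ⟨β, hβα, Or.inr h5⟩
        have hb := big'_of_ne (hα := hα) hF hT
        exact Or.inr ⟨le_rfl, WF_lt_WT, hb.1, hb.2⟩
  have hPg : Pgsq α hα (unionInterp α hα fun γ _ => approx P γ)
      (TP P (unionInterp α hα fun γ _ => approx P γ)) := (sqa_iff_gsq (hα := hα)).1 P2
  -- Property (3)
  have P3 : approx P α =
      iter P α hα (unionInterp α hα fun γ _ => approx P γ) omega1 := by
    rw [approx]
    exact (dif_pos hα).trans (if_pos ⟨C1, P2⟩)
  -- Property (1)
  have P1 : ∀ γ < α, eqa γ (approx P γ) (approx P α) := by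
    intro γ hγ
    refine eqa_trans (U1 γ hγ) ?_
    rw [P3]
    rw [eqa_iff_pointwise]
    intro A β hβ
    by_cases hEx : cond A
    · obtain ⟨ζ, hζα, hJA, hcond⟩ := unionInterp_pos (hα := hα) hEx
      have hd : degLT ((unionInterp α hα fun γ _ => approx P γ) A) α := by
        rw [hJA]
        exact degLT_of_idx (hγω ζ hζα) hcond hζα
      rw [gsq_eq_of_degLT_left (iter_start_gsq hPg omega1 A) hd]
      exact veqAt_refl
    · have hJA := unionInterp_neg (hα := hα) hEx
      have hd : ¬ degLT ((unionInterp α hα fun γ _ => approx P γ) A) α := by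
        rw [hJA]
        intro hh
        exact absurd hh (by
          rw [degLT_iff (hα := hα)]
          rintro (h | h)
          · exact absurd (WF_lt_WF.1 h) (lt_irrefl α)
          · exact not_WT_lt_WF h)
      have hbd := iter_bounds (hα := hα) hPg omega1 A hd
      have hβα : β < α := lt_of_le_of_lt hβ hγ
      have hn := no_small_of_bounds hbd.1 hbd.2 β hβα
      rw [hJA]
      have hL1 : (WF α hα : W).1 ≠ TVPre.F β := by
        intro hc
        simp only [WF] at hc
        exact absurd (TVPre.F.inj hc) (ne_of_gt hβα)
      have hL2 : (WF α hα : W).1 ≠ TVPre.T β := by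
        intro hc
        simp only [WF] at hc
        cases hc
      exact ⟨iff_of_false hL1 hn.1, iff_of_false hL2 hn.2⟩
  -- Property (4)
  have P4 : sqa (α + 1) (approx P α) (TP P (approx P α)) := by
    rw [P3]
    exact iter_omega1_sqa_succ hPg
  exact ⟨P1, P2, P3, P4⟩

end ILP
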